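/- arXiv:1210.0184 — 5 statements merged into one kernel-verified Lean document; each statement's English description precedes it below -/
import Mathlib

section
/- A bounded invertible operator T = [[a,b],[c,d]] on K is J-unitary if and only if a*a − c*c = 1, d*d − b*b = 1 and a*b = c*d, and also if and only if aa* − bb* = 1, dd* − cc* = 1 and ac* = bd*. Moreover, for J-unitary T the diagonal blocks a and d are invertible with ‖a^{-1}‖ ≤ 1 and ‖d^{-1}‖ ≤ 1, and one has ‖a^{-1}b‖ < 1, ‖d^{-1}c‖ < 1, ‖bd^{-1}‖ < 1 and ‖ca^{-1}‖ < 1. -/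
noncomputable section

open ContinuousLinearMap

variable {H : Type*} [NormedAddCommGroup H] [InnerProductSpace ℂ H] [CompleteSpace H]
  [TopologicalSpace.SeparableSpace H]

local notation "K" => WithLp 2 (H × H)

/-- The 2×2 block operator `[[a,b],[c,d]]` on `K = H ⊕ H`. -/
def blk (a b c d : H →L[ℂ] H) : K →L[ℂ] K :=
  (((WithLp.prodContinuousLinearEquiv 2 ℂ H H).symm : (H × H) →L[ℂ] K).comp
      ((((a.comp (fst ℂ H H)) + (b.comp (snd ℂ H H))).prod
        ((c.comp (fst ℂ H H)) + (d.comp (snd ℂ H H)))))).comp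
    ((WithLp.prodContinuousLinearEquiv 2 ℂ H H : K →L[ℂ] (H × H)))

/-- The fundamental symmetry `J = [[1,0],[0,-1]]`. -/
def fundJ : K →L[ℂ] K := blk 1 0 0 (-1)

/-- A bounded operator `T` on the Krein space `(K, J)` is `J`-unitary if it is invertible
and `T* J T = J`. -/
def IsJUnitary (T : K →L[ℂ] K) : Prop :=
  IsUnit T ∧ star T * fundJ * T = fundJ

set_option linter.unusedSectionVars false

lemma blk_mul (a b c d a' b' c' d' : H →L[ℂ] H) :
    blk a b c d * blk a' b' c' d' =
      blk (a*a' + b*c') (a*b' + b*d') (c*a' + d*c') (c*b' + d*d') := by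
  ext x
  simp [blk, mul_apply]
  exact ⟨by abel, by abel⟩

lemma blk_one : (blk 1 0 0 1 : K →L[ℂ] K) = 1 := by
  ext x <;> simp [blk] <;> rfl

lemma star_blk (a b c d : H →L[ℂ] H) :
    star (blk a b c d) = blk (star a) (star c) (star b) (star d) := by
  rw [star_eq_adjoint]
  symm
  rw [eq_adjoint_iff]
  intro x y
  simp [blk, WithLp.prod_inner_apply, star_eq_adjoint, adjoint_inner_left, inner_add_left,
    inner_add_right]
  ring

lemma blk_inj {a b c d a' b' c' d' : H →L[ℂ] H}
    (h : blk a b c d = blk a' b' c' d') : a = a' ∧ b = b' ∧ c = c' ∧ d = d' := by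
  have h1 := fun x : H => congrArg (fun T : K →L[ℂ] K =>
    (WithLp.prodContinuousLinearEquiv 2 ℂ H H
      (T ((WithLp.prodContinuousLinearEquiv 2 ℂ H H).symm (x, 0))))) h
  have h2 := fun x : H => congrArg (fun T : K →L[ℂ] K =>
    (WithLp.prodContinuousLinearEquiv 2 ℂ H H
      (T ((WithLp.prodContinuousLinearEquiv 2 ℂ H H).symm (0, x))))) h
  simp [blk, Prod.ext_iff] at h1 h2
  exact ⟨ContinuousLinearMap.ext fun x => (h1 x).1, ContinuousLinearMap.ext fun x => (h2 x).1,
    ContinuousLinearMap.ext fun x => (h1 x).2, ContinuousLinearMap.ext fun x => (h2 x).2⟩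

lemma blk_eq_blk_iff {a b c d a' b' c' d' : H →L[ℂ] H} :
    blk a b c d = blk a' b' c' d' ↔ (a = a' ∧ b = b' ∧ c = c' ∧ d = d') := by
  refine ⟨blk_inj, ?_⟩
  rintro ⟨rfl, rfl, rfl, rfl⟩
  rfl

lemma fundJ_mul_fundJ : (fundJ : K →L[ℂ] K) * fundJ = 1 := by
  rw [fundJ, blk_mul]
  rw [show ((1:H →L[ℂ] H) * 1 + 0 * 0) = 1 by noncomm_ring,
    show ((1:H →L[ℂ] H) * 0 + 0 * -1) = 0 by noncomm_ring,
    show ((0:H →L[ℂ] H) * 1 + -1 * 0) = 0 by noncomm_ring,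
    show ((0:H →L[ℂ] H) * 0 + -1 * -1) = 1 by noncomm_ring]
  exact blk_one

lemma jun_eq_iff (a b c d : H →L[ℂ] H) :
    star (blk a b c d) * fundJ * blk a b c d = fundJ ↔
      (star a * a - star c * c = 1 ∧ star a * b - star c * d = 0 ∧
       star b * a - star d * c = 0 ∧ star b * b - star d * d = -1) := by
  rw [star_blk, fundJ, blk_mul, blk_mul]
  rw [show (star a * 1 + star c * 0) * a + (star a * 0 + star c * -1) * c
      = star a * a - star c * c by noncomm_ring,
    show (star a * 1 + star c * 0) * b + (star a * 0 + star c * -1) * d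
      = star a * b - star c * d by noncomm_ring,
    show (star b * 1 + star d * 0) * a + (star b * 0 + star d * -1) * c
      = star b * a - star d * c by noncomm_ring,
    show (star b * 1 + star d * 0) * b + (star b * 0 + star d * -1) * d
      = star b * b - star d * d by noncomm_ring]
  exact blk_eq_blk_iff

lemma isJUnitary_star {T : K →L[ℂ] K} (h : IsJUnitary T) : IsJUnitary (star T) := by
  obtain ⟨hu, he⟩ := h
  refine ⟨hu.star, ?_⟩
  rw [star_star]
  obtain ⟨u, hu'⟩ := hu
  have hl : (fundJ * star T * fundJ) * T = 1 := by
    calc (fundJ * star T * fundJ) * T = fundJ * (star T * fundJ * T) := by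
          simp only [mul_assoc]
    _ = fundJ * fundJ := by rw [he]
    _ = 1 := fundJ_mul_fundJ
  have hlinv : (↑u⁻¹ : K →L[ℂ] K) = fundJ * star T * fundJ :=
    Units.inv_eq_of_mul_eq_one_left (by rw [hu']; exact hl)
  have hr : T * (fundJ * star T * fundJ) = 1 := by
    rw [← hlinv, ← hu', u.mul_inv]
  calc T * fundJ * star T = T * fundJ * star T * (fundJ * fundJ) := by
        rw [fundJ_mul_fundJ, mul_one]
  _ = (T * (fundJ * star T * fundJ)) * fundJ := by simp only [mul_assoc]
  _ = fundJ := by rw [hr, one_mul]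

lemma jun_iff1 (a b c d : H →L[ℂ] H) :
    IsJUnitary (blk a b c d) ↔
      IsUnit (blk a b c d) ∧
        star a * a - star c * c = 1 ∧ star d * d - star b * b = 1 ∧
        star a * b = star c * d := by
  rw [IsJUnitary, jun_eq_iff]
  constructor
  · rintro ⟨hu, h1, h2, h3, h4⟩
    refine ⟨hu, h1, ?_, sub_eq_zero.mp h2⟩
    rw [← neg_sub, h4, neg_neg]
  · rintro ⟨hu, h1, h2, h3⟩
    refine ⟨hu, h1, sub_eq_zero.mpr h3, sub_eq_zero.mpr ?_, ?_⟩
    · have := congrArg star h3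
      rwa [star_mul, star_mul, star_star, star_star] at this
    · rw [← neg_sub, h2]

lemma jun_iff2 (a b c d : H →L[ℂ] H) :
    IsJUnitary (blk a b c d) ↔
      IsUnit (blk a b c d) ∧
        a * star a - b * star b = 1 ∧ d * star d - c * star c = 1 ∧
        a * star c = b * star d := by
  constructor
  · intro h
    have h' := isJUnitary_star h
    rw [star_blk] at h'
    obtain ⟨-, e1, e2, e3⟩ := (jun_iff1 (star a) (star c) (star b) (star d)).mp h'
    simp only [star_star] at e1 e2 e3
    exact ⟨h.1, e1, e2, e3⟩
  · rintro ⟨hu, e1, e2, e3⟩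
    have h' : IsJUnitary (blk (star a) (star c) (star b) (star d)) := by
      refine (jun_iff1 (star a) (star c) (star b) (star d)).mpr ⟨?_, ?_, ?_, ?_⟩
      · rw [← star_blk]; exact hu.star
      · rwa [star_star, star_star]
      · rwa [star_star, star_star]
      · simp only [star_star]; exact e3
    have h'' := isJUnitary_star h'
    rwa [← star_blk, star_star] at h''

lemma aux_isUnit {x : H →L[ℂ] H} (h1 : IsUnit (star x * x)) (h2 : IsUnit (x * star x)) :
    IsUnit x := by
  set l := Ring.inverse (star x * x) * star x with hl
  set r := star x * Ring.inverse (x * star x) with hr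
  have hlx : l * x = 1 := by
    rw [hl, mul_assoc, Ring.inverse_mul_cancel _ h1]
  have hxr : x * r = 1 := by
    rw [hr, ← mul_assoc, Ring.mul_inverse_cancel _ h2]
  have hlr : l = r := by
    calc l = l * (x * r) := by rw [hxr, mul_one]
    _ = (l * x) * r := (mul_assoc l x r).symm
    _ = r := by rw [hlx, one_mul]
  exact ⟨⟨x, r, hxr, hlr ▸ hlx⟩, rfl⟩

lemma aux_norm_inv {x : H →L[ℂ] H} (hx : IsUnit x) (h : 1 ≤ star x * x) :
    ‖Ring.inverse x‖ ≤ 1 := by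
  set ix := Ring.inverse x with hix
  have hxi1 : x * ix = 1 := Ring.mul_inverse_cancel x hx
  have hix1 : ix * x = 1 := Ring.inverse_mul_cancel x hx
  have hu : IsUnit (star x * x) := (hx.star.mul hx)
  set v : (H →L[ℂ] H)ˣ := hu.unit with hv
  have hvc : (v : H →L[ℂ] H) = star x * x := rfl
  have hvinv : ((v⁻¹ : (H →L[ℂ] H)ˣ) : H →L[ℂ] H) = ix * star ix := by
    refine Units.inv_eq_of_mul_eq_one_right ?_
    rw [hvc]
    calc star x * x * (ix * star ix) = star x * (x * ix) * star ix := by simp [mul_assoc]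
    _ = star x * star ix := by rw [hxi1, mul_one]
    _ = star (ix * x) := by rw [star_mul]
    _ = 1 := by rw [hix1, star_one]
  have hle : ((v⁻¹ : (H →L[ℂ] H)ˣ) : H →L[ℂ] H) ≤ 1 :=
    CStarAlgebra.inv_le_one (by rw [← Units.val_le_val, Units.val_one, hvc]; exact h)
  rw [hvinv] at hle
  have hnn : (0 : H →L[ℂ] H) ≤ ix * star ix := mul_star_self_nonneg ix
  have hn := CStarAlgebra.norm_le_norm_of_nonneg_of_le hnn hle
  have hn1 : ‖(1 : H →L[ℂ] H)‖ ≤ 1 := by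
    rw [ContinuousLinearMap.one_def]; exact ContinuousLinearMap.norm_id_le
  have hsq : ‖ix * star ix‖ = ‖ix‖ * ‖ix‖ := CStarRing.norm_self_mul_star
  nlinarith [norm_nonneg ix]

lemma aux_contraction {x y : H →L[ℂ] H} (hx : IsUnit x)
    (h : x * star x = 1 + y * star y) : ‖Ring.inverse x * y‖ < 1 := by
  rcases subsingleton_or_nontrivial H with hs | hs
  · have : Subsingleton (H →L[ℂ] H) := inferInstance
    rw [Subsingleton.elim (Ring.inverse x * y) 0, norm_zero]
    exact one_pos
  · set ix := Ring.inverse x with hixdef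
    have hxi1 : x * ix = 1 := Ring.mul_inverse_cancel x hx
    have hix1 : ix * x = 1 := Ring.inverse_mul_cancel x hx
    set r := ix * y with hrdef
    set g : H →L[ℂ] H := 1 + star y * y with hgdef
    have hyg : y * g = x * (star x * y) := by
      rw [← mul_assoc, h, hgdef]; noncomm_ring
    have hgy : g * star y = star y * (x * star x) := by
      rw [h, hgdef]; noncomm_ring
    have e1 : star r * r * g = star y * y := by
      calc star r * r * g = star y * (star ix * (ix * (y * g))) := by
            simp [hrdef, star_mul, mul_assoc]
      _ = star y * (star ix * (star x * y)) := by
            rw [hyg, ← mul_assoc ix x, hix1, one_mul]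
      _ = star y * (star (x * ix) * y) := by rw [star_mul, mul_assoc]
      _ = star y * y := by rw [hxi1, star_one, one_mul]
    have e2 : g * (star r * r) = star y * y := by
      calc g * (star r * r) = g * star y * (star ix * (ix * y)) := by
            simp [hrdef, star_mul, mul_assoc]
      _ = star y * (x * (star x * star ix)) * (ix * y) := by rw [hgy]; simp [mul_assoc]
      _ = star y * (x * star (ix * x)) * (ix * y) := by rw [star_mul]
      _ = star y * x * (ix * y) := by rw [hix1, star_one, mul_one]
      _ = star y * (x * ix) * y := by simp [mul_assoc]
      _ = star y * y := by rw [hxi1, mul_one]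
    have hval : g * (1 - star r * r) = 1 := by
      rw [mul_sub, mul_one, e2, hgdef]; abel
    have hinv : (1 - star r * r) * g = 1 := by
      rw [sub_mul, one_mul, e1, hgdef]; abel
    set u : (H →L[ℂ] H)ˣ := ⟨g, 1 - star r * r, hval, hinv⟩ with hu
    have hg1 : (1 : H →L[ℂ] H) ≤ g := le_add_of_nonneg_right (star_mul_self_nonneg y)
    have hg0 : (0 : H →L[ℂ] H) ≤ g := zero_le_one.trans hg1
    have hn1 : ‖(1 : H →L[ℂ] H)‖ = 1 := norm_one
    have hng : 1 ≤ ‖g‖ := by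
      have := CStarAlgebra.norm_le_norm_of_nonneg_of_le zero_le_one hg1
      rwa [hn1] at this
    have hgpos : (0:ℝ) < ‖g‖ := lt_of_lt_of_le one_pos hng
    set w : (H →L[ℂ] H)ˣ := ⟨‖g‖ • 1, ‖g‖⁻¹ • 1, by
        rw [smul_mul_smul_comm, one_mul, mul_inv_cancel₀ hgpos.ne', one_smul], by
        rw [smul_mul_smul_comm, one_mul, inv_mul_cancel₀ hgpos.ne', one_smul]⟩ with hw
    have hgw : (u : H →L[ℂ] H) ≤ w := by
      show g ≤ ‖g‖ • 1
      have hsa : IsSelfAdjoint g := by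
        rw [hgdef]
        exact (IsSelfAdjoint.one _).add (IsSelfAdjoint.star_mul_self y)
      have := IsSelfAdjoint.le_algebraMap_norm_self hsa
      rwa [Algebra.algebraMap_eq_smul_one] at this
    have hwinv : ((w⁻¹ : (H →L[ℂ] H)ˣ) : H →L[ℂ] H) ≤ ((u⁻¹ : (H →L[ℂ] H)ˣ) : H →L[ℂ] H) :=
      CStarAlgebra.inv_le_inv hg0 hgw
    have hw' : ‖g‖⁻¹ • (1 : H →L[ℂ] H) ≤ 1 - star r * r := hwinv
    have hrle : star r * r ≤ (1 - ‖g‖⁻¹) • (1 : H →L[ℂ] H) := by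
      rw [sub_smul, one_smul]
      have := sub_le_sub_left hw' 1
      rwa [sub_sub_cancel] at this
    have hnr : ‖star r * r‖ ≤ ‖(1 - ‖g‖⁻¹) • (1 : H →L[ℂ] H)‖ :=
      CStarAlgebra.norm_le_norm_of_nonneg_of_le (star_mul_self_nonneg r) hrle
    have hginv1 : ‖g‖⁻¹ ≤ 1 := by
      rw [inv_le_one_iff₀]; right; exact hng
    have hsmul : ‖(1 - ‖g‖⁻¹) • (1 : H →L[ℂ] H)‖ = 1 - ‖g‖⁻¹ := by
      rw [norm_smul, Real.norm_eq_abs, abs_of_nonneg (by linarith), hn1, mul_one]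
    have hsq : ‖star r * r‖ = ‖r‖ * ‖r‖ := CStarRing.norm_star_mul_self
    have hginvpos : (0:ℝ) < ‖g‖⁻¹ := inv_pos.mpr hgpos
    nlinarith [norm_nonneg r]

lemma one_le_one_add_star_mul_self (c : H →L[ℂ] H) :
    (1 : H →L[ℂ] H) ≤ 1 + star c * c := le_add_of_nonneg_right (star_mul_self_nonneg c)

lemma isUnit_one_add_star_mul_self (c : H →L[ℂ] H) : IsUnit (1 + star c * c) :=
  CStarAlgebra.isUnit_of_le 1 (one_le_one_add_star_mul_self c)

set_option linter.unusedSectionVars true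

/-- Proposition 3.1 of the paper: the block characterization of
`J`-unitary operators, together with the invertibility of `a`, `d` and the norm estimates
on `a⁻¹`, `d⁻¹`, `a⁻¹b`, `d⁻¹c`, `bd⁻¹`, `ca⁻¹`. -/
theorem jUnitary_block_characterization (a b c d : H →L[ℂ] H) :
    (IsJUnitary (blk a b c d) ↔
      IsUnit (blk a b c d) ∧
        star a * a - star c * c = 1 ∧ star d * d - star b * b = 1 ∧
        star a * b = star c * d) ∧
    (IsJUnitary (blk a b c d) ↔
      IsUnit (blk a b c d) ∧
        a * star a - b * star b = 1 ∧ d * star d - c * star c = 1 ∧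
        a * star c = b * star d) ∧
    (IsJUnitary (blk a b c d) →
      IsUnit a ∧ IsUnit d ∧
        ‖Ring.inverse a‖ ≤ 1 ∧ ‖Ring.inverse d‖ ≤ 1 ∧
        ‖Ring.inverse a * b‖ < 1 ∧ ‖Ring.inverse d * c‖ < 1 ∧
        ‖b * Ring.inverse d‖ < 1 ∧ ‖c * Ring.inverse a‖ < 1) := by
  refine ⟨jun_iff1 a b c d, jun_iff2 a b c d, ?_⟩
  intro h
  obtain ⟨hu, h1, h2, h3⟩ := (jun_iff1 a b c d).mp h
  obtain ⟨-, h4, h5, h6⟩ := (jun_iff2 a b c d).mp h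
  have hA1 : star a * a = 1 + star c * c := sub_eq_iff_eq_add.mp h1
  have hA2 : a * star a = 1 + b * star b := sub_eq_iff_eq_add.mp h4
  have hD1 : star d * d = 1 + star b * b := sub_eq_iff_eq_add.mp h2
  have hD2 : d * star d = 1 + c * star c := sub_eq_iff_eq_add.mp h5
  have hua : IsUnit a := by
    refine aux_isUnit ?_ ?_
    · rw [hA1]; exact isUnit_one_add_star_mul_self c
    · rw [hA2]
      have := isUnit_one_add_star_mul_self (star b)
      rwa [star_star] at this
  have hud : IsUnit d := by
    refine aux_isUnit ?_ ?_
    · rw [hD1]; exact isUnit_one_add_star_mul_self b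
    · rw [hD2]
      have := isUnit_one_add_star_mul_self (star c)
      rwa [star_star] at this
  refine ⟨hua, hud, ?_, ?_, ?_, ?_, ?_, ?_⟩
  · exact aux_norm_inv hua (by rw [hA1]; exact one_le_one_add_star_mul_self c)
  · exact aux_norm_inv hud (by rw [hD1]; exact one_le_one_add_star_mul_self b)
  · exact aux_contraction hua hA2
  · exact aux_contraction hud hD2
  · have hD1' : star d * star (star d) = 1 + star b * star (star b) := by
      rwa [star_star, star_star]
    have h7 := aux_contraction hud.star hD1'
    calc ‖b * Ring.inverse d‖ = ‖star (b * Ring.inverse d)‖ := (norm_star _).symm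
    _ = ‖star (Ring.inverse d) * star b‖ := by rw [star_mul]
    _ = ‖Ring.inverse (star d) * star b‖ := by rw [Ring.inverse_star]
    _ < 1 := h7
  · have hA1' : star a * star (star a) = 1 + star c * star (star c) := by
      rwa [star_star, star_star]
    have h7 := aux_contraction hua.star hA1'
    calc ‖c * Ring.inverse a‖ = ‖star (c * Ring.inverse a)‖ := (norm_star _).symm
    _ = ‖star (Ring.inverse a) * star c‖ := by rw [star_mul]
    _ = ‖Ring.inverse (star a) * star c‖ := by rw [Ring.inverse_star]
    _ < 1 := h7
end
end

section
/- Let T be a J-unitary operator on K, let λ be a complex number with |λ| = 1, and let φ, ψ ∈ K satisfy Tφ = λφ and Tψ = λψ + φ. Then ⟨φ, Jφ⟩ = 0. -/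
noncomputable section

open ContinuousLinearMap

variable {H : Type*} [NormedAddCommGroup H] [InnerProductSpace ℂ H] [CompleteSpace H]
  [TopologicalSpace.SeparableSpace H]

local notation "K" => WithLp 2 (H × H)

/-- from the proof of Proposition 3.12 / Corollary 3.13 of the paper:
if `λ` is a unit eigenvalue of a `J`-unitary `T` with a nontrivial Jordan chain
`Tφ = λφ`, `Tψ = λψ + φ`, then the eigenvector `φ` is `J`-isotropic: `⟪φ, Jφ⟫ = 0`. -/
theorem jordan_chain_isotropic_eigenvector (T : K →L[ℂ] K) (hT : IsJUnitary T)
    (lam : ℂ) (hlam : ‖lam‖ = 1) (φ ψ : K)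
    (hφ : T φ = lam • φ) (hψ : T ψ = lam • ψ + φ) :
    (inner ℂ φ ((fundJ : K →L[ℂ] K) φ) : ℂ) = 0 := by
  have hconj : (starRingEnd ℂ) lam * lam = 1 := by
    have := Complex.mul_conj' lam
    rw [hlam] at this
    simpa [mul_comm] using this
  have h1 : (inner ℂ (T ψ) ((fundJ : K →L[ℂ] K) (T φ)) : ℂ)
      = inner ℂ ψ ((fundJ : K →L[ℂ] K) φ) := by
    have h0 : ((star T * fundJ * T : K →L[ℂ] K)) φ = (fundJ : K →L[ℂ] K) φ := by
      rw [hT.2]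
    calc (inner ℂ (T ψ) ((fundJ : K →L[ℂ] K) (T φ)) : ℂ)
        = inner ℂ ψ ((star T) ((fundJ : K →L[ℂ] K) (T φ))) := by
          rw [ContinuousLinearMap.star_eq_adjoint, ContinuousLinearMap.adjoint_inner_right]
      _ = inner ℂ ψ (((star T * fundJ * T : K →L[ℂ] K)) φ) := by
          rw [ContinuousLinearMap.mul_apply, ContinuousLinearMap.mul_apply]
      _ = inner ℂ ψ ((fundJ : K →L[ℂ] K) φ) := by rw [h0]
  rw [hφ, hψ, map_smul] at h1
  rw [inner_add_left, inner_smul_left, inner_smul_right, inner_smul_right] at h1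
  rw [← mul_assoc, hconj, one_mul] at h1
  have h2 : lam * (inner ℂ φ ((fundJ : K →L[ℂ] K) φ) : ℂ) = 0 := by
    linear_combination h1
  have hlam0 : lam ≠ 0 := by
    intro h; rw [h] at hlam; simp at hlam
  exact (mul_eq_zero.mp h2).resolve_left hlam0
end
end

section
/- Let T be a J-unitary operator on K and let z be a complex number with |z| = 1 such that T − z·1 is a Fredholm operator. Then the Fredholm index of T − z·1 vanishes, i.e. dim ker(T − z·1) = dim ker((T − z·1)*). -/
noncomputable section

open ContinuousLinearMap

variable {H : Type*} [NormedAddCommGroup H] [InnerProductSpace ℂ H] [CompleteSpace H]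
  [TopologicalSpace.SeparableSpace H]

local notation "K" => WithLp 2 (H × H)

/-- A bounded operator on a Hilbert space is Fredholm: finite-dimensional kernel,
closed range, and finite-dimensional orthogonal complement of the range. -/
def IsFredholmOp (A : K →L[ℂ] K) : Prop :=
  FiniteDimensional ℂ (LinearMap.ker (A : K →ₗ[ℂ] K)) ∧ IsClosed (Set.range A : Set K) ∧
    FiniteDimensional ℂ ↥((LinearMap.range (A : K →ₗ[ℂ] K))ᗮ)


lemma fundJ_sq : fundJ * fundJ = (1 : K →L[ℂ] K) := by
  ext x <;> (simp [fundJ, blk, mul_apply]; rfl)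

/-- Proposition 4.2 (ii) of the paper: if `T` is `J`-unitary and
`T − z·1` is Fredholm for some `z` on the unit circle, then the Fredholm index of
`T − z·1` vanishes: `dim ker(T − z) = dim ker((T − z)*)`. -/
theorem jUnitary_fredholm_index_zero (T : K →L[ℂ] K) (hT : IsJUnitary T)
    (z : ℂ) (hz : ‖z‖ = 1) (hF : IsFredholmOp (T - z • (1 : K →L[ℂ] K))) :
    Module.finrank ℂ (LinearMap.ker ((T - z • (1 : K →L[ℂ] K)) : K →ₗ[ℂ] K))
      = Module.finrank ℂ (LinearMap.ker ((star (T - z • (1 : K →L[ℂ] K)) : K →L[ℂ] K) : K →ₗ[ℂ] K)) := by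
  obtain ⟨hu, hJ⟩ := hT
  obtain ⟨u, rfl⟩ := hu
  set J : K →L[ℂ] K := fundJ with hJdef
  set S : K →L[ℂ] K := (↑u : K →L[ℂ] K) - z • 1 with hSdef
  set B : K →L[ℂ] K := (↑u⁻¹ : K →L[ℂ] K) with hBdef
  have hB1 : (↑u : K →L[ℂ] K) * B = 1 := u.mul_inv
  have hB2 : B * (↑u : K →L[ℂ] K) = 1 := u.inv_mul
  have J2 : J * J = 1 := fundJ_sq
  have hJJ : ∀ x : K, J (J x) = x := by
    intro x
    have := congrArg (fun A : K →L[ℂ] K => A x) J2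
    simpa [mul_apply] using this
  have hstar : star (↑u : K →L[ℂ] K) = J * B * J := by
    have h1 : star (↑u : K →L[ℂ] K) * J = J * B := by
      calc star (↑u : K →L[ℂ] K) * J = star (↑u : K →L[ℂ] K) * J * ((↑u : K →L[ℂ] K) * B) := by
            rw [hB1, mul_one]
        _ = (star (↑u : K →L[ℂ] K) * J * ↑u) * B := by noncomm_ring
        _ = J * B := by rw [hJ]
    calc star (↑u : K →L[ℂ] K) = star (↑u : K →L[ℂ] K) * (J * J) := by rw [J2, mul_one]
      _ = (star (↑u : K →L[ℂ] K) * J) * J := by noncomm_ring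
      _ = J * B * J := by rw [h1]
  have hzz : (starRingEnd ℂ) z * z = 1 := by
    rw [mul_comm, Complex.mul_conj, Complex.normSq_eq_norm_sq, hz]
    norm_num
  have key : star S = (-(starRingEnd ℂ z)) • (J * (B * (S * J))) := by
    have : B * (S * J) = J - z • (B * J) := by
      rw [hSdef, sub_mul, mul_sub, ← mul_assoc, hB2, one_mul, smul_mul_assoc, one_mul,
        mul_smul_comm]
    rw [this, mul_sub, J2, mul_smul_comm, ← mul_assoc, smul_sub, smul_smul, neg_mul, hzz]
    rw [hSdef, star_sub (R := K →L[ℂ] K), star_smul, star_one, hstar]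
    simp only [starRingEnd_apply]
    module
  have hzne : (-(starRingEnd ℂ z)) ≠ 0 := by
    simp only [ne_eq, neg_eq_zero, map_eq_zero]
    rintro rfl
    simp at hz
  have hBinj : ∀ x : K, B x = 0 → x = 0 := by
    intro x hx
    have : (↑u : K →L[ℂ] K) (B x) = x := by
      have := congrArg (fun A : K →L[ℂ] K => A x) hB1
      simpa [mul_apply] using this
    rw [hx] at this
    simpa using this.symm
  have hker : LinearMap.ker ((star S : K →L[ℂ] K) : K →ₗ[ℂ] K) =
      Submodule.map (J : K →ₗ[ℂ] K) (LinearMap.ker (S : K →ₗ[ℂ] K)) := by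
    ext x
    simp only [LinearMap.mem_ker, Submodule.mem_map, ContinuousLinearMap.coe_coe]
    constructor
    · intro hx
      refine ⟨J x, ?_, hJJ x⟩
      have hx' : (-(starRingEnd ℂ z)) • (J (B (S (J x)))) = 0 := by
        have := congrArg (fun A : K →L[ℂ] K => A x) key
        simp only [mul_apply_eq_comp, smul_apply] at this
        rw [← this]; exact hx
      have h1 : J (B (S (J x))) = 0 := by
        rcases smul_eq_zero.mp hx' with h | h
        · exact absurd h hzne
        · exact h
      have h2 : B (S (J x)) = 0 := by
        have := congrArg J h1
        rw [hJJ] at this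
        simpa using this
      exact hBinj _ h2
    · rintro ⟨y, hy, rfl⟩
      have := congrArg (fun A : K →L[ℂ] K => A (J y)) key
      simp only [mul_apply_eq_comp, smul_apply] at this
      rw [this, hJJ, hy]
      simp
  rw [hker]
  exact (LinearEquiv.finrank_map_eq (LinearEquiv.ofLinear (J : K →ₗ[ℂ] K) (J : K →ₗ[ℂ] K)
    (by ext x; simpa [mul_apply] using hJJ x) (by ext x; simpa [mul_apply] using hJJ x))
    (LinearMap.ker (S : K →ₗ[ℂ] K))).symm
end
end

section
/- Let H be a bounded self-adjoint operator on a complex Hilbert space and for E ∈ ℝ set V^E = (1 − i(H − E·1))(1 + i(H − E·1))^{-1}. Then: (i) V^E is unitary; (ii) ker(V^E − 1) = ker(H − E·1); (iii) the map E ↦ V^E is differentiable in operator norm with (1/i)(V^E)* (d/dE)V^E = 2(1 + (H − E·1)²)^{-1}, which is a positive operator bounded below by 2/(1 + ‖H − E·1‖²) times the identity; and (iv) ‖V^E + 1‖ → 0 as |E| → ∞. -/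
noncomputable section

namespace BoundStatesAux

open Complex ContinuousLinearMap

variable {𝓗 : Type*} [NormedAddCommGroup 𝓗] [InnerProductSpace ℂ 𝓗] [CompleteSpace 𝓗]

lemma star_one_add (A : 𝓗 →L[ℂ] 𝓗) (hA : IsSelfAdjoint A) :
    star ((1 : 𝓗 →L[ℂ] 𝓗) + Complex.I • A) = 1 - Complex.I • A := by
  simp [star_smul, hA.star_eq, Complex.star_def, Complex.conj_I, sub_eq_add_neg, neg_smul]

lemma star_one_sub (A : 𝓗 →L[ℂ] 𝓗) (hA : IsSelfAdjoint A) :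
    star ((1 : 𝓗 →L[ℂ] 𝓗) - Complex.I • A) = 1 + Complex.I • A := by
  simp [star_smul, hA.star_eq, Complex.star_def, Complex.conj_I, sub_eq_add_neg, neg_smul]

lemma isUnit_one_add (A : 𝓗 →L[ℂ] 𝓗) (hA : IsSelfAdjoint A) :
    IsUnit ((1 : 𝓗 →L[ℂ] 𝓗) + Complex.I • A) := by
  have hI : Complex.I ∉ spectrum ℂ A := by
    intro h
    have := hA.mem_spectrum_eq_re h
    simp [Complex.ext_iff] at this
  have h1 : IsUnit ((algebraMap ℂ (𝓗 →L[ℂ] 𝓗)) Complex.I - A) := spectrum.notMem_iff.mp hI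
  have h2 : IsUnit ((algebraMap ℂ (𝓗 →L[ℂ] 𝓗)) (-Complex.I)) :=
    (isUnit_iff_ne_zero.mpr (neg_ne_zero.mpr Complex.I_ne_zero)).map (algebraMap ℂ _)
  have key : (algebraMap ℂ (𝓗 →L[ℂ] 𝓗)) (-Complex.I) *
      ((algebraMap ℂ (𝓗 →L[ℂ] 𝓗)) Complex.I - A) = 1 + Complex.I • A := by
    have hII : (-Complex.I) * Complex.I = 1 := by
      rw [neg_mul, Complex.I_mul_I, neg_neg]
    rw [mul_sub, ← map_mul, hII, map_one, ← Algebra.smul_def, neg_smul, sub_neg_eq_add]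
  exact key ▸ h2.mul h1

lemma isUnit_one_sub (A : 𝓗 →L[ℂ] 𝓗) (hA : IsSelfAdjoint A) :
    IsUnit ((1 : 𝓗 →L[ℂ] 𝓗) - Complex.I • A) := by
  rw [← star_one_add A hA]
  exact (isUnit_one_add A hA).star

lemma smul_sq (A : 𝓗 →L[ℂ] 𝓗) :
    (Complex.I • A) * (Complex.I • A) = -(A ^ 2) := by
  rw [smul_mul_smul_comm, Complex.I_mul_I, neg_smul, one_smul, sq]

lemma mul_sub_add (A : 𝓗 →L[ℂ] 𝓗) :
    ((1 : 𝓗 →L[ℂ] 𝓗) - Complex.I • A) * (1 + Complex.I • A) = 1 + A ^ 2 := by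
  rw [sub_mul, one_mul, mul_add, mul_one, smul_sq]
  abel

lemma mul_add_sub (A : 𝓗 →L[ℂ] 𝓗) :
    ((1 : 𝓗 →L[ℂ] 𝓗) + Complex.I • A) * (1 - Complex.I • A) = 1 + A ^ 2 := by
  rw [add_mul, one_mul, mul_sub, mul_one, smul_sq]
  abel

lemma commute_add_sub (A : 𝓗 →L[ℂ] 𝓗) :
    Commute ((1 : 𝓗 →L[ℂ] 𝓗) + Complex.I • A) (1 - Complex.I • A) :=
  (mul_add_sub A).trans (mul_sub_add A).symm

lemma isUnit_one_add_sq (A : 𝓗 →L[ℂ] 𝓗) (hA : IsSelfAdjoint A) :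
    IsUnit ((1 : 𝓗 →L[ℂ] 𝓗) + A ^ 2) := by
  rw [← mul_sub_add A]
  exact (isUnit_one_sub A hA).mul (isUnit_one_add A hA)

/-- `V = 2 (1+iA)⁻¹ − 1`. -/
lemma V_form (A : 𝓗 →L[ℂ] 𝓗) (hA : IsSelfAdjoint A) :
    ((1 : 𝓗 →L[ℂ] 𝓗) - Complex.I • A) * Ring.inverse (1 + Complex.I • A)
      = (2 : ℂ) • Ring.inverse ((1 : 𝓗 →L[ℂ] 𝓗) + Complex.I • A) - 1 := by
  have hM : ((1 : 𝓗 →L[ℂ] 𝓗) - Complex.I • A)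
      = (2 : ℂ) • (1 : 𝓗 →L[ℂ] 𝓗) - (1 + Complex.I • A) := by
    rw [two_smul]; abel
  rw [hM, sub_mul, smul_mul_assoc, one_mul, Ring.mul_inverse_cancel _ (isUnit_one_add A hA)]

/-- `star V = (1−iA)⁻¹ (1+iA)`. -/
lemma star_V (A : 𝓗 →L[ℂ] 𝓗) (hA : IsSelfAdjoint A) :
    star (((1 : 𝓗 →L[ℂ] 𝓗) - Complex.I • A) * Ring.inverse (1 + Complex.I • A))
      = Ring.inverse ((1 : 𝓗 →L[ℂ] 𝓗) - Complex.I • A) * (1 + Complex.I • A) := by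
  rw [star_mul, ← Ring.inverse_star, star_one_add A hA, star_one_sub A hA]

/-- `(1−iA)⁻¹ (1+iA)⁻¹ = (1+A²)⁻¹`. -/
lemma inv_mul_inv (A : 𝓗 →L[ℂ] 𝓗) :
    Ring.inverse ((1 : 𝓗 →L[ℂ] 𝓗) - Complex.I • A) * Ring.inverse (1 + Complex.I • A)
      = Ring.inverse ((1 : 𝓗 →L[ℂ] 𝓗) + A ^ 2) := by
  rw [← mul_add_sub A, Ring.mul_inverse_rev' (commute_add_sub A)]

lemma unitary_mem (A : 𝓗 →L[ℂ] 𝓗) (hA : IsSelfAdjoint A) :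
    ((1 : 𝓗 →L[ℂ] 𝓗) - Complex.I • A) * Ring.inverse (1 + Complex.I • A)
      ∈ unitary (𝓗 →L[ℂ] 𝓗) := by
  set B := (1 : 𝓗 →L[ℂ] 𝓗) + Complex.I • A with hB
  set M := (1 : 𝓗 →L[ℂ] 𝓗) - Complex.I • A with hM
  have hBu := isUnit_one_add A hA
  have hMu := isUnit_one_sub A hA
  have hBM : B * M = M * B := commute_add_sub A
  rw [Unitary.mem_iff, star_V A hA]
  constructor
  · calc Ring.inverse M * B * (M * Ring.inverse B)
        = Ring.inverse M * (B * M * Ring.inverse B) := by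
          rw [mul_assoc, ← mul_assoc B]
      _ = Ring.inverse M * (M * (B * Ring.inverse B)) := by rw [hBM, mul_assoc]
      _ = 1 := by
          rw [Ring.mul_inverse_cancel _ hBu, mul_one, Ring.inverse_mul_cancel _ hMu]
  · have hMR : M * Ring.inverse B = Ring.inverse B * M := by
      calc M * Ring.inverse B = Ring.inverse B * (B * M) * Ring.inverse B := by
            rw [← mul_assoc, Ring.inverse_mul_cancel _ hBu, one_mul]
        _ = Ring.inverse B * (M * B) * Ring.inverse B := by rw [hBM]
        _ = Ring.inverse B * M * (B * Ring.inverse B) := by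
            rw [mul_assoc, mul_assoc, mul_assoc]
        _ = Ring.inverse B * M := by rw [Ring.mul_inverse_cancel _ hBu, mul_one]
    calc M * Ring.inverse B * (Ring.inverse M * B)
        = Ring.inverse B * M * (Ring.inverse M * B) := by rw [hMR]
      _ = Ring.inverse B * (M * Ring.inverse M) * B := by
          rw [mul_assoc, mul_assoc, mul_assoc]
      _ = 1 := by rw [Ring.mul_inverse_cancel _ hMu, mul_one, Ring.inverse_mul_cancel _ hBu]

/-- V − 1 = (−2i) (1+iA)⁻¹ A. -/
lemma V_sub_one (A : 𝓗 →L[ℂ] 𝓗) (hA : IsSelfAdjoint A) :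
    ((1 : 𝓗 →L[ℂ] 𝓗) - Complex.I • A) * Ring.inverse (1 + Complex.I • A) - 1
      = ((-2) * Complex.I) • (Ring.inverse ((1 : 𝓗 →L[ℂ] 𝓗) + Complex.I • A) * A) := by
  set B := (1 : 𝓗 →L[ℂ] 𝓗) + Complex.I • A with hB
  have hBu := isUnit_one_add A hA
  have h1 : Ring.inverse B - 1 = -(Complex.I • (Ring.inverse B * A)) := by
    conv_lhs => rw [← Ring.inverse_mul_cancel B hBu]
    rw [hB, mul_add, mul_one, mul_smul_comm]
    abel
  rw [V_form A hA, sub_sub, ← two_smul ℂ (1 : 𝓗 →L[ℂ] 𝓗), ← smul_sub, h1, smul_neg,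
    smul_smul, neg_mul, ← neg_smul]

lemma ker_V_sub_one (A : 𝓗 →L[ℂ] 𝓗) (hA : IsSelfAdjoint A) :
    LinearMap.ker ((((1 : 𝓗 →L[ℂ] 𝓗) - Complex.I • A) * Ring.inverse (1 + Complex.I • A) - 1
      : 𝓗 →L[ℂ] 𝓗) : 𝓗 →ₗ[ℂ] 𝓗)
      = LinearMap.ker (A : 𝓗 →ₗ[ℂ] 𝓗) := by
  have hBu := isUnit_one_add A hA
  ext x
  simp only [LinearMap.mem_ker, ContinuousLinearMap.coe_coe]
  rw [V_sub_one A hA]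
  rw [ContinuousLinearMap.smul_apply, ContinuousLinearMap.mul_apply, smul_eq_zero]
  have hne : (-2 : ℂ) * Complex.I ≠ 0 := by
    simp [Complex.I_ne_zero]
  simp only [hne, false_or]
  constructor
  · intro h
    have h2 : ((1 + Complex.I • A) * Ring.inverse (1 + Complex.I • A)) (A x) = 0 := by
      rw [ContinuousLinearMap.mul_apply, h, map_zero]
    rwa [Ring.mul_inverse_cancel _ hBu, ContinuousLinearMap.one_apply] at h2
  · intro h
    rw [h, map_zero]

/-- lower bound for the inverse of `1 + A²`. -/
lemma inverse_pos_bound (A : 𝓗 →L[ℂ] 𝓗) (hA : IsSelfAdjoint A) (φ : 𝓗) :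
    (1 + ‖A‖ ^ 2)⁻¹ * ‖φ‖ ^ 2
      ≤ (inner ℂ φ (Ring.inverse ((1 : 𝓗 →L[ℂ] 𝓗) + A ^ 2) φ) : ℂ).re := by
  have hU := isUnit_one_add_sq A hA
  set ψ := Ring.inverse ((1 : 𝓗 →L[ℂ] 𝓗) + A ^ 2) φ with hψ
  have hφ : φ = ψ + A (A ψ) := by
    have h1 : (((1 : 𝓗 →L[ℂ] 𝓗) + A ^ 2) * Ring.inverse ((1 : 𝓗 →L[ℂ] 𝓗) + A ^ 2)) φ = φ := by
      rw [Ring.mul_inverse_cancel _ hU, ContinuousLinearMap.one_apply]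
    calc φ = (((1 : 𝓗 →L[ℂ] 𝓗) + A ^ 2) * Ring.inverse ((1 : 𝓗 →L[ℂ] 𝓗) + A ^ 2)) φ := h1.symm
      _ = ψ + A (A ψ) := by
          rw [ContinuousLinearMap.mul_apply, ← hψ, ContinuousLinearMap.add_apply,
            ContinuousLinearMap.one_apply, sq, ContinuousLinearMap.mul_apply]
  have hAA : (inner ℂ (A (A ψ)) ψ : ℂ) = inner ℂ (A ψ) (A ψ) := by
    nth_rewrite 1 [← hA.adjoint_eq]
    exact ContinuousLinearMap.adjoint_inner_left A ψ (A ψ)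
  have hre : (inner ℂ φ ψ : ℂ).re = ‖ψ‖ ^ 2 + ‖A ψ‖ ^ 2 := by
    conv_lhs => rw [hφ]
    rw [inner_add_left, hAA, inner_self_eq_norm_sq_to_K, inner_self_eq_norm_sq_to_K]
    norm_cast
  rw [hre]
  have hφn : ‖φ‖ ≤ ‖ψ‖ + ‖A‖ * ‖A ψ‖ := by
    calc ‖φ‖ = ‖ψ + A (A ψ)‖ := by rw [← hφ]
      _ ≤ ‖ψ‖ + ‖A (A ψ)‖ := norm_add_le _ _
      _ ≤ ‖ψ‖ + ‖A‖ * ‖A ψ‖ := by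
          gcongr
          exact A.le_opNorm _
  have hc : (0 : ℝ) < 1 + ‖A‖ ^ 2 := by positivity
  rw [inv_mul_le_iff₀ hc]
  have h1 : ‖φ‖ ^ 2 ≤ (‖ψ‖ + ‖A‖ * ‖A ψ‖) ^ 2 := by
    have := norm_nonneg φ
    nlinarith
  nlinarith [sq_nonneg (‖A‖ * ‖ψ‖ - ‖A ψ‖), norm_nonneg ψ, norm_nonneg (A ψ), norm_nonneg A]

lemma isSelfAdjoint_sub_real (H₀ : 𝓗 →L[ℂ] 𝓗) (hsa : IsSelfAdjoint H₀) (e : ℝ) :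
    IsSelfAdjoint (H₀ - (e : ℂ) • (1 : 𝓗 →L[ℂ] 𝓗)) := by
  refine hsa.sub ?_
  rw [IsSelfAdjoint, star_smul, star_one, Complex.star_def, Complex.conj_ofReal]

/-- norm bound for `(1+iA)⁻¹` when `A = H₀ − e` and `|e|` is large. -/
lemma inverse_norm_bound (H₀ : 𝓗 →L[ℂ] 𝓗) (hsa : IsSelfAdjoint H₀) (e : ℝ)
    (he : ‖H₀‖ + 2 ≤ |e|) :
    ‖Ring.inverse ((1 : 𝓗 →L[ℂ] 𝓗) + Complex.I • (H₀ - (e : ℂ) • (1 : 𝓗 →L[ℂ] 𝓗)))‖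
      ≤ (|e| - ‖H₀‖ - 1)⁻¹ := by
  set A := H₀ - (e : ℂ) • (1 : 𝓗 →L[ℂ] 𝓗) with hAdef
  have hAsa : IsSelfAdjoint A := isSelfAdjoint_sub_real H₀ hsa e
  have hBu := isUnit_one_add A hAsa
  have hd : (0 : ℝ) < |e| - ‖H₀‖ - 1 := by linarith
  refine ContinuousLinearMap.opNorm_le_bound _ (by positivity) fun y => ?_
  set x := Ring.inverse ((1 : 𝓗 →L[ℂ] 𝓗) + Complex.I • A) y with hx
  have hBx : x + Complex.I • (A x) = y := by
    have h1 : (((1 : 𝓗 →L[ℂ] 𝓗) + Complex.I • A) *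
        Ring.inverse ((1 : 𝓗 →L[ℂ] 𝓗) + Complex.I • A)) y = y := by
      rw [Ring.mul_inverse_cancel _ hBu, ContinuousLinearMap.one_apply]
    calc x + Complex.I • (A x)
        = (((1 : 𝓗 →L[ℂ] 𝓗) + Complex.I • A) *
            Ring.inverse ((1 : 𝓗 →L[ℂ] 𝓗) + Complex.I • A)) y := by
          rw [ContinuousLinearMap.mul_apply, ← hx, ContinuousLinearMap.add_apply,
            ContinuousLinearMap.one_apply, ContinuousLinearMap.smul_apply]
      _ = y := h1
  have h1 : ‖A x‖ - ‖x‖ ≤ ‖y‖ := by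
    have h2 : ‖Complex.I • (A x)‖ - ‖-x‖ ≤ ‖Complex.I • (A x) - -x‖ := norm_sub_norm_le _ _
    rw [sub_neg_eq_add, add_comm] at h2
    rw [hBx] at h2
    simpa [norm_smul] using h2
  have h2 : (|e| - ‖H₀‖) * ‖x‖ ≤ ‖A x‖ := by
    have hAx : A x = H₀ x - (e : ℂ) • x := by
      rw [hAdef, ContinuousLinearMap.sub_apply, ContinuousLinearMap.smul_apply,
        ContinuousLinearMap.one_apply]
    have h3 : ‖(e : ℂ) • x‖ - ‖H₀ x‖ ≤ ‖(e : ℂ) • x - H₀ x‖ := norm_sub_norm_le _ _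
    rw [← norm_neg ((e : ℂ) • x - H₀ x), neg_sub, ← hAx] at h3
    have h4 : ‖(e : ℂ) • x‖ = |e| * ‖x‖ := by
      rw [norm_smul, Complex.norm_real, Real.norm_eq_abs]
    have h5 : ‖H₀ x‖ ≤ ‖H₀‖ * ‖x‖ := H₀.le_opNorm x
    nlinarith [norm_nonneg x]
  have h3 : (|e| - ‖H₀‖ - 1) * ‖x‖ ≤ ‖y‖ := by nlinarith [norm_nonneg x]
  calc ‖x‖ = (|e| - ‖H₀‖ - 1)⁻¹ * ((|e| - ‖H₀‖ - 1) * ‖x‖) := by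
        field_simp
    _ ≤ (|e| - ‖H₀‖ - 1)⁻¹ * ‖y‖ := by
        gcongr

lemma hasDerivAt_V (H₀ : 𝓗 →L[ℂ] 𝓗) (hsa : IsSelfAdjoint H₀) (e : ℝ) :
    HasDerivAt
      (fun x : ℝ => (2 : ℂ) • Ring.inverse
        ((1 : 𝓗 →L[ℂ] 𝓗) + Complex.I • (H₀ - (x : ℂ) • (1 : 𝓗 →L[ℂ] 𝓗))) - 1)
      (((2 : ℂ) * Complex.I) •
        (Ring.inverse ((1 : 𝓗 →L[ℂ] 𝓗) + Complex.I • (H₀ - (e : ℂ) • (1 : 𝓗 →L[ℂ] 𝓗))) *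
         Ring.inverse ((1 : 𝓗 →L[ℂ] 𝓗) + Complex.I • (H₀ - (e : ℂ) • (1 : 𝓗 →L[ℂ] 𝓗))))) e := by
  have hAsa := isSelfAdjoint_sub_real H₀ hsa e
  have hu : IsUnit ((1 : 𝓗 →L[ℂ] 𝓗) + Complex.I • (H₀ - (e : ℂ) • (1 : 𝓗 →L[ℂ] 𝓗))) :=
    isUnit_one_add _ hAsa
  have hBfun : ∀ x : ℝ, (1 : 𝓗 →L[ℂ] 𝓗) + Complex.I • (H₀ - (x : ℂ) • (1 : 𝓗 →L[ℂ] 𝓗))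
      = ((1 : 𝓗 →L[ℂ] 𝓗) + Complex.I • H₀) - x • (Complex.I • (1 : 𝓗 →L[ℂ] 𝓗)) := by
    intro x
    rw [smul_sub, smul_comm Complex.I ((x : ℂ)) (1 : 𝓗 →L[ℂ] 𝓗), Complex.coe_smul]
    abel
  have hd1 : HasDerivAt
      (fun x : ℝ => ((1 : 𝓗 →L[ℂ] 𝓗) + Complex.I • H₀) - x • (Complex.I • (1 : 𝓗 →L[ℂ] 𝓗)))
      (-(Complex.I • (1 : 𝓗 →L[ℂ] 𝓗))) e := by
    have h := ((hasDerivAt_id e).smul_const (Complex.I • (1 : 𝓗 →L[ℂ] 𝓗))).const_sub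
      ((1 : 𝓗 →L[ℂ] 𝓗) + Complex.I • H₀)
    simpa using h
  have hd2 : HasDerivAt
      (fun x : ℝ => (1 : 𝓗 →L[ℂ] 𝓗) + Complex.I • (H₀ - (x : ℂ) • (1 : 𝓗 →L[ℂ] 𝓗)))
      (-(Complex.I • (1 : 𝓗 →L[ℂ] 𝓗))) e := by
    have hfun : (fun x : ℝ => (1 : 𝓗 →L[ℂ] 𝓗) + Complex.I • (H₀ - (x : ℂ) • (1 : 𝓗 →L[ℂ] 𝓗)))
        = fun x : ℝ => ((1 : 𝓗 →L[ℂ] 𝓗) + Complex.I • H₀) - x • (Complex.I • (1 : 𝓗 →L[ℂ] 𝓗)) :=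
      funext hBfun
    rw [hfun]
    exact hd1
  have hfd := hasFDerivAt_ringInverse (𝕜 := ℝ) hu.unit
  rw [hu.unit_spec] at hfd
  have hd3 := hfd.comp_hasDerivAt e hd2
  have hr : ((hu.unit⁻¹ : (𝓗 →L[ℂ] 𝓗)ˣ) : 𝓗 →L[ℂ] 𝓗)
      = Ring.inverse ((1 : 𝓗 →L[ℂ] 𝓗) + Complex.I • (H₀ - (e : ℂ) • (1 : 𝓗 →L[ℂ] 𝓗))) := by
    rw [← Ring.inverse_unit hu.unit, hu.unit_spec]
  have hd4 : HasDerivAt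
      (fun x : ℝ => Ring.inverse ((1 : 𝓗 →L[ℂ] 𝓗) + Complex.I • (H₀ - (x : ℂ) • (1 : 𝓗 →L[ℂ] 𝓗))))
      (Complex.I •
        (Ring.inverse ((1 : 𝓗 →L[ℂ] 𝓗) + Complex.I • (H₀ - (e : ℂ) • (1 : 𝓗 →L[ℂ] 𝓗))) *
         Ring.inverse ((1 : 𝓗 →L[ℂ] 𝓗) + Complex.I • (H₀ - (e : ℂ) • (1 : 𝓗 →L[ℂ] 𝓗))))) e := by
    simp only [Function.comp_def] at hd3
    refine hd3.congr_deriv ?_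
    rw [ContinuousLinearMap.neg_apply, ContinuousLinearMap.mulLeftRight_apply, hr]
    rw [mul_neg, neg_mul, neg_neg, mul_smul_comm, mul_one, smul_mul_assoc]
  have hd5 := (hd4.const_smul (2 : ℂ)).sub_const (1 : 𝓗 →L[ℂ] 𝓗)
  simpa [smul_smul] using hd5

lemma starV_mul_D (A : 𝓗 →L[ℂ] 𝓗) (hA : IsSelfAdjoint A) :
    (-Complex.I) • (star (((1 : 𝓗 →L[ℂ] 𝓗) - Complex.I • A) * Ring.inverse (1 + Complex.I • A)) *
      (((2 : ℂ) * Complex.I) •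
        (Ring.inverse ((1 : 𝓗 →L[ℂ] 𝓗) + Complex.I • A) *
         Ring.inverse ((1 : 𝓗 →L[ℂ] 𝓗) + Complex.I • A))))
      = (2 : ℂ) • Ring.inverse ((1 : 𝓗 →L[ℂ] 𝓗) + A ^ 2) := by
  have hBu := isUnit_one_add A hA
  rw [star_V A hA, mul_smul_comm]
  have key : (Ring.inverse ((1 : 𝓗 →L[ℂ] 𝓗) - Complex.I • A) * (1 + Complex.I • A)) *
      (Ring.inverse ((1 : 𝓗 →L[ℂ] 𝓗) + Complex.I • A) *
       Ring.inverse ((1 : 𝓗 →L[ℂ] 𝓗) + Complex.I • A))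
      = Ring.inverse ((1 : 𝓗 →L[ℂ] 𝓗) + A ^ 2) := by
    calc (Ring.inverse ((1 : 𝓗 →L[ℂ] 𝓗) - Complex.I • A) * (1 + Complex.I • A)) *
        (Ring.inverse ((1 : 𝓗 →L[ℂ] 𝓗) + Complex.I • A) *
         Ring.inverse ((1 : 𝓗 →L[ℂ] 𝓗) + Complex.I • A))
        = Ring.inverse ((1 : 𝓗 →L[ℂ] 𝓗) - Complex.I • A) *
            (((1 + Complex.I • A) * Ring.inverse ((1 : 𝓗 →L[ℂ] 𝓗) + Complex.I • A)) *
             Ring.inverse ((1 : 𝓗 →L[ℂ] 𝓗) + Complex.I • A)) := by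
          rw [mul_assoc, ← mul_assoc (1 + Complex.I • A)]
      _ = Ring.inverse ((1 : 𝓗 →L[ℂ] 𝓗) - Complex.I • A) *
            Ring.inverse ((1 : 𝓗 →L[ℂ] 𝓗) + Complex.I • A) := by
          rw [Ring.mul_inverse_cancel _ hBu, one_mul]
      _ = Ring.inverse ((1 : 𝓗 →L[ℂ] 𝓗) + A ^ 2) := inv_mul_inv A
  rw [key, smul_smul]
  congr 1
  rw [show -Complex.I * (2 * Complex.I) = -(2 * (Complex.I * Complex.I)) from by ring,
    Complex.I_mul_I]
  norm_num

end BoundStatesAux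

/-- Proposition 6.3 of the paper: for a bounded self-adjoint operator
`H₀` and `V^E = (1 − i(H₀ − E))(1 + i(H₀ − E))⁻¹`, each `V^E` is unitary, its fixed
vectors are exactly the eigenvectors of `H₀` for the eigenvalue `E`, the path `E ↦ V^E`
is differentiable with `(1/i)(V^E)* (d/dE)V^E = 2(1 + (H₀ − E)²)⁻¹ ≥ 2/(1+‖H₀−E‖²)·1`,
and `V^E → −1` in norm as `|E| → ∞`. -/
theorem bound_states_unitary_path
    {E : Type*} [NormedAddCommGroup E] [InnerProductSpace ℂ E] [CompleteSpace E]
    (H₀ : E →L[ℂ] E) (hsa : IsSelfAdjoint H₀)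
    (V : ℝ → (E →L[ℂ] E))
    (hV : ∀ e : ℝ, V e =
      (1 - Complex.I • (H₀ - (e : ℂ) • (1 : E →L[ℂ] E))) *
        Ring.inverse (1 + Complex.I • (H₀ - (e : ℂ) • (1 : E →L[ℂ] E)))) :
    -- (i) each V^E is unitary
    (∀ e : ℝ, V e ∈ unitary (E →L[ℂ] E)) ∧
    -- (ii) ker(V^E − 1) = ker(H₀ − E·1)
    (∀ e : ℝ, LinearMap.ker ((V e - (1 : E →L[ℂ] E) : E →L[ℂ] E) : E →ₗ[ℂ] E)
      = LinearMap.ker ((H₀ - (e : ℂ) • (1 : E →L[ℂ] E) : E →L[ℂ] E) : E →ₗ[ℂ] E)) ∧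
    -- (iii) differentiability and the derivative formula, with the lower bound
    (∀ e : ℝ, ∃ D : E →L[ℂ] E,
      HasDerivAt V D e ∧
      (-Complex.I) • (star (V e) * D)
        = (2 : ℂ) • Ring.inverse (1 + (H₀ - (e : ℂ) • (1 : E →L[ℂ] E)) ^ 2) ∧
      ∀ φ : E,
        2 / (1 + ‖H₀ - (e : ℂ) • (1 : E →L[ℂ] E)‖ ^ 2) * ‖φ‖ ^ 2 ≤
          (inner ℂ φ (((-Complex.I) • (star (V e) * D)) φ) : ℂ).re) ∧
    -- (iv) ‖V^E + 1‖ → 0 as |E| → ∞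
    Filter.Tendsto (fun e : ℝ => ‖V e + 1‖) (Filter.atTop ⊔ Filter.atBot)
      (nhds 0) := by
  have hAsa : ∀ e : ℝ, IsSelfAdjoint (H₀ - (e : ℂ) • (1 : E →L[ℂ] E)) := fun e =>
    BoundStatesAux.isSelfAdjoint_sub_real H₀ hsa e
  refine ⟨fun e => ?_, fun e => ?_, fun e => ?_, ?_⟩
  · rw [hV e]
    exact BoundStatesAux.unitary_mem _ (hAsa e)
  · rw [hV e]
    exact BoundStatesAux.ker_V_sub_one _ (hAsa e)
  · refine ⟨((2 : ℂ) * Complex.I) •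
      (Ring.inverse ((1 : E →L[ℂ] E) + Complex.I • (H₀ - (e : ℂ) • (1 : E →L[ℂ] E))) *
       Ring.inverse ((1 : E →L[ℂ] E) + Complex.I • (H₀ - (e : ℂ) • (1 : E →L[ℂ] E)))), ?_, ?_, ?_⟩
    · have h1 := BoundStatesAux.hasDerivAt_V H₀ hsa e
      have h2 : V = fun x : ℝ => (2 : ℂ) • Ring.inverse
          ((1 : E →L[ℂ] E) + Complex.I • (H₀ - (x : ℂ) • (1 : E →L[ℂ] E))) - 1 := by
        funext x
        rw [hV x, BoundStatesAux.V_form _ (hAsa x)]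
      rw [h2]
      exact h1
    · rw [hV e]
      exact BoundStatesAux.starV_mul_D _ (hAsa e)
    · intro φ
      rw [hV e, BoundStatesAux.starV_mul_D _ (hAsa e)]
      have hb := BoundStatesAux.inverse_pos_bound _ (hAsa e) φ
      rw [ContinuousLinearMap.smul_apply, inner_smul_right]
      have hre : ((2 : ℂ) * (inner ℂ φ (Ring.inverse
            ((1 : E →L[ℂ] E) + (H₀ - (e : ℂ) • (1 : E →L[ℂ] E)) ^ 2) φ) : ℂ)).re
          = 2 * ((inner ℂ φ (Ring.inverse
            ((1 : E →L[ℂ] E) + (H₀ - (e : ℂ) • (1 : E →L[ℂ] E)) ^ 2) φ) : ℂ)).re := by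
        simp [Complex.mul_re]
      rw [hre, div_eq_mul_inv]
      nlinarith [hb]
  · have habs : Filter.Tendsto (fun e : ℝ => |e|) (Filter.atTop ⊔ Filter.atBot)
        Filter.atTop := by
      rw [Filter.tendsto_sup]
      exact ⟨Filter.tendsto_abs_atTop_atTop, Filter.tendsto_abs_atBot_atTop⟩
    refine squeeze_zero' (g := fun e : ℝ => 2 * (|e| - ‖H₀‖ - 1)⁻¹) ?_ ?_ ?_
    · filter_upwards with e using norm_nonneg _
    · filter_upwards [habs.eventually_ge_atTop (‖H₀‖ + 2)] with e he
      have hVe : V e + 1 = (2 : ℂ) • Ring.inverse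
          ((1 : E →L[ℂ] E) + Complex.I • (H₀ - (e : ℂ) • (1 : E →L[ℂ] E))) := by
        rw [hV e, BoundStatesAux.V_form _ (hAsa e), sub_add_cancel]
      rw [hVe, norm_smul]
      have h2 : ‖(2 : ℂ)‖ = 2 := by norm_num
      rw [h2]
      have h3 := BoundStatesAux.inverse_norm_bound H₀ hsa e he
      linarith
    · have h4 : Filter.Tendsto (fun t : ℝ => 2 * (t - ‖H₀‖ - 1)⁻¹) Filter.atTop (nhds 0) := by
        have h1 : Filter.Tendsto (fun t : ℝ => t - ‖H₀‖ - 1) Filter.atTop Filter.atTop := by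
          have := Filter.tendsto_atTop_add_const_right Filter.atTop (-(‖H₀‖ + 1))
            (Filter.tendsto_id (α := ℝ))
          refine this.congr fun t => ?_
          simp only [id_eq]
          ring
        have h2 := h1.inv_tendsto_atTop
        have h3 := h2.const_mul (2 : ℝ)
        simpa using h3
      exact h4.comp habs
end
end

section
/- Let T and S be bounded operators on a separable complex Hilbert space such that T − S is compact, and let C be a connected component of ℂ \ σ(T). Then one of the following holds: (i) C contains a point of the resolvent set of S, and in this case σ(S) ∩ C is a discrete subset of C, i.e. it has no accumulation point in C; or (ii) every point of C is an eigenvalue of S. -/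
noncomputable section

open Filter Metric Set Topology ContinuousLinearMap

local notation "⟪" x ", " y "⟫" => @inner ℂ _ _ x y

/-- Any compact operator on a complex Hilbert space can be approximated in operator norm
by finite-rank operators (finite sums of rank-one operators). -/
lemma compact_approx {H : Type*} [NormedAddCommGroup H] [InnerProductSpace ℂ H] [CompleteSpace H]
    (Kc : H →L[ℂ] H) (h : IsCompactOperator ⇑Kc) {ε : ℝ} (hε : 0 < ε) :
    ∃ (n : ℕ) (y : Fin n → H) (α : Fin n → (H →L[ℂ] ℂ)),
      ‖Kc - ∑ i, (α i).smulRight (y i)‖ < ε := by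
  have hcl : IsCompact (closure (⇑Kc '' closedBall 0 1)) :=
    IsCompactOperator.isCompact_closure_image_closedBall (f := (Kc : H →ₗ[ℂ] H)) h 1
  have htb : TotallyBounded (⇑Kc '' closedBall 0 1) :=
    hcl.totallyBounded.subset subset_closure
  obtain ⟨t, htfin, hcov⟩ := Metric.totallyBounded_iff.mp htb (ε / 2) (half_pos hε)
  set W : Submodule ℂ H := Submodule.span ℂ t with hW
  haveI : FiniteDimensional ℂ W := FiniteDimensional.span_of_finite ℂ htfin
  set b := stdOrthonormalBasis ℂ W with hb
  refine ⟨_, fun i => (b i : H), fun i => (innerSL ℂ ((b i : H))).comp Kc, ?_⟩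
  set F : H →L[ℂ] H := ∑ i, ((innerSL ℂ ((b i : H))).comp Kc).smulRight ((b i : H)) with hF
  have hFx : ∀ x : H, F x = (W.orthogonalProjectionOnto (Kc x) : H) := by
    intro x
    rw [b.orthogonalProjectionOnto_apply_eq_sum (Kc x)]
    push_cast
    simp [hF, ContinuousLinearMap.sum_apply]
  have key : ∀ x : H, ‖x‖ ≤ 1 → ‖Kc x - F x‖ ≤ ε / 2 := by
    intro x hx
    obtain ⟨y', hy't, hy'⟩ : ∃ y' ∈ t, Kc x ∈ ball y' (ε / 2) := by
      have := hcov (mem_image_of_mem _ (mem_closedBall_zero_iff.mpr hx))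
      simpa using this
    have hy'W : y' ∈ W := Submodule.subset_span hy't
    have hmin : ‖Kc x - (W.orthogonalProjectionOnto (Kc x) : H)‖ ≤ ‖Kc x - y'‖ := by
      rw [Submodule.coe_orthogonalProjectionOnto_apply, Submodule.starProjection_minimal]
      refine ciInf_le ⟨0, ?_⟩ (⟨y', hy'W⟩ : W)
      rintro r ⟨w, rfl⟩
      exact norm_nonneg _
    rw [hFx x]
    calc ‖Kc x - (W.orthogonalProjectionOnto (Kc x) : H)‖ ≤ ‖Kc x - y'‖ := hmin
      _ ≤ ε / 2 := le_of_lt (by simpa [dist_eq_norm] using hy')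
  have hnorm : ‖Kc - F‖ ≤ ε / 2 := by
    refine ContinuousLinearMap.opNorm_le_bound _ (le_of_lt (half_pos hε)) fun x => ?_
    rcases eq_or_ne x 0 with rfl | hx0
    · simp
    · have hxpos : (0:ℝ) < ‖x‖ := norm_pos_iff.mpr hx0
      set u : H := ((‖x‖ : ℂ))⁻¹ • x with hu
      have hunorm : ‖u‖ ≤ 1 := by
        rw [hu, norm_smul]
        simp [norm_inv, hxpos.ne', abs_of_pos hxpos]
      have hxu : x = ((‖x‖ : ℂ)) • u := by
        rw [hu, smul_smul]
        rw [mul_inv_cancel₀ (by exact_mod_cast hxpos.ne')]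
        simp
      calc ‖(Kc - F) x‖ = ‖((‖x‖ : ℂ)) • ((Kc - F) u)‖ := by rw [← map_smul, ← hxu]
        _ = ‖x‖ * ‖(Kc - F) u‖ := by
            rw [norm_smul]; simp [abs_of_pos hxpos]
        _ ≤ ‖x‖ * (ε / 2) := by
            refine mul_le_mul_of_nonneg_left ?_ (le_of_lt hxpos)
            simpa using key u hunorm
        _ = ε / 2 * ‖x‖ := mul_comm _ _
  calc ‖Kc - F‖ ≤ ε / 2 := hnorm
    _ < ε := half_lt_self hε

/-- Local analytic Fredholm dichotomy: if `Amap` is an analytic family of operators on an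
open set `U`, compact at `z₁ ∈ U`, then near `z₁` either `1 - Amap w` is nowhere invertible,
or it is invertible on a punctured neighbourhood; moreover non-invertibility at `z₁` forces a
nontrivial kernel. -/
lemma local_dichotomy {H : Type*} [NormedAddCommGroup H] [InnerProductSpace ℂ H] [CompleteSpace H]
    (Amap : ℂ → (H →L[ℂ] H)) {U : Set ℂ} (hU : IsOpen U)
    (hdiff : ∀ z ∈ U, DifferentiableAt ℂ Amap z) {z₁ : ℂ} (hz₁ : z₁ ∈ U)
    (hcptA : IsCompactOperator ⇑(Amap z₁)) :
    ((∀ᶠ w in 𝓝 z₁, ¬ IsUnit (1 - Amap w)) ∨ (∀ᶠ w in 𝓝[≠] z₁, IsUnit (1 - Amap w))) ∧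
      (¬ IsUnit (1 - Amap z₁) → LinearMap.ker ((1 - Amap z₁ : H →L[ℂ] H) : H →ₗ[ℂ] H) ≠ ⊥) := by
  obtain ⟨n, y, α, hFclose⟩ := compact_approx (Amap z₁) hcptA (by norm_num : (0:ℝ) < 1/2)
  set F : H →L[ℂ] H := ∑ i, (α i).smulRight (y i) with hFdef
  have hcont : ContinuousAt Amap z₁ := (hdiff z₁ hz₁).continuousAt
  have hVnhds : {w : ℂ | ‖Amap w - F‖ < 1} ∩ U ∈ 𝓝 z₁ := by
    refine inter_mem ?_ (hU.mem_nhds hz₁)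
    have hc : ContinuousAt (fun w => ‖Amap w - F‖) z₁ := (hcont.sub continuousAt_const).norm
    have h1 : ‖Amap z₁ - F‖ < 1 := lt_of_lt_of_le hFclose (by norm_num)
    exact hc.eventually_lt continuousAt_const h1
  obtain ⟨r, hr, hball⟩ := Metric.mem_nhds_iff.mp hVnhds
  have hEunit : ∀ w ∈ ball z₁ r, IsUnit ((1 : H →L[ℂ] H) - (Amap w - F)) := fun w hw =>
    ⟨Units.oneSub _ (hball hw).1, rfl⟩
  set g : ℂ → (H →L[ℂ] H) := fun w => Ring.inverse ((1 : H →L[ℂ] H) - (Amap w - F)) with hg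
  have hEg : ∀ w ∈ ball z₁ r, ((1 : H →L[ℂ] H) - (Amap w - F)) * g w = 1 := fun w hw =>
    Ring.mul_inverse_cancel _ (hEunit w hw)
  have hfactor : ∀ w ∈ ball z₁ r,
      ((1 : H →L[ℂ] H) - (Amap w - F)) * (1 - g w * F) = 1 - Amap w := by
    intro w hw
    have h2 : ((1 : H →L[ℂ] H) - (Amap w - F)) * (1 - g w * F)
        = (1 - (Amap w - F)) - ((1 - (Amap w - F)) * g w) * F := by noncomm_ring
    rw [h2, hEg w hw, one_mul]
    abel
  set M : ℂ → Matrix (Fin n) (Fin n) ℂ := fun w => Matrix.of fun i j => α i (g w (y j)) with hM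
  set d : ℂ → ℂ := fun w => (1 - M w).det with hd
  set B : ℂ → (H →L[ℂ] H) := fun w => g w * F with hB
  have hBapply : ∀ (w : ℂ) (x : H), B w x = ∑ i, α i x • g w (y i) := by
    intro w x
    simp only [hB, ContinuousLinearMap.mul_apply, hFdef, ContinuousLinearMap.sum_apply,
      ContinuousLinearMap.smulRight_apply, map_sum, map_smul]
  have hcoef : ∀ (w : ℂ) (β : Fin n → ℂ) (j : Fin n),
      α j (∑ i, β i • g w (y i)) = ((M w).mulVec β) j := by
    intro w β j
    simp only [map_sum, map_smul, Matrix.mulVec, dotProduct, hM, Matrix.of_apply]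
    simp [smul_eq_mul, mul_comm]
  -- d w = 0 → nontrivial kernel of 1 - B w
  have hker : ∀ w, d w = 0 → ∃ x : H, x ≠ 0 ∧ (1 - B w) x = 0 := by
    intro w hdw
    obtain ⟨β, hβ0, hβ⟩ := (Matrix.exists_mulVec_eq_zero_iff).mpr hdw
    set x : H := ∑ i, β i • g w (y i) with hx
    have hαx : ∀ j, α j x = β j := by
      intro j
      have h1 : ((1 - M w).mulVec β) j = 0 := by rw [hβ]; rfl
      rw [Matrix.sub_mulVec, Matrix.one_mulVec] at h1
      have h2 : β j - ((M w).mulVec β) j = 0 := h1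
      rw [hx, hcoef w β j]
      linear_combination -h2
    have hBx : B w x = x := by
      rw [hBapply w x, hx]
      exact Finset.sum_congr rfl fun i _ => by rw [hαx i]
    obtain ⟨j, hj⟩ := Function.ne_iff.mp hβ0
    refine ⟨x, fun hx0 => hj ?_, ?_⟩
    · rw [← hαx j, hx0, map_zero]; simp
    · simp [ContinuousLinearMap.sub_apply, hBx]
  -- units are injective
  have hunit_inj : ∀ f : H →L[ℂ] H, IsUnit f → Function.Injective f := by
    intro f hf
    obtain ⟨u, rfl⟩ := hf
    intro a b hab
    have h3 := congrArg (fun v => ((↑u⁻¹ : H →L[ℂ] H)) v) hab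
    simpa [← ContinuousLinearMap.mul_apply, u.inv_mul] using h3
  -- d w ≠ 0 → IsUnit (1 - B w)
  have hunitB : ∀ w ∈ ball z₁ r, d w ≠ 0 → IsUnit ((1 : H →L[ℂ] H) - B w) := by
    intro w _ hdw
    have hdet : IsUnit (1 - M w).det := isUnit_iff_ne_zero.mpr hdw
    have hinj : LinearMap.ker (((1 : H →L[ℂ] H) - B w : H →L[ℂ] H) : H →ₗ[ℂ] H) = ⊥ := by
      rw [LinearMap.ker_eq_bot']
      intro x hx
      have hxB : x = B w x := by
        have h4 : x - B w x = 0 := by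
          simpa [ContinuousLinearMap.sub_apply] using hx
        rw [← sub_eq_zero]; exact h4
      have hβeq : (1 - M w).mulVec (fun i => α i x) = 0 := by
        funext j
        have h5 : α j x = ((M w).mulVec (fun i => α i x)) j := by
          conv_lhs => rw [hxB, hBapply w x]
          exact hcoef w (fun i => α i x) j
        simp only [Matrix.sub_mulVec, Matrix.one_mulVec, Pi.sub_apply, Pi.zero_apply]
        exact sub_eq_zero.mpr h5
      have hβ0 : (fun i => α i x) = 0 := by
        by_contra hβne
        exact hdw (Matrix.exists_mulVec_eq_zero_iff.mp ⟨_, hβne, hβeq⟩)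
      have hall : ∀ i, α i x = 0 := fun i => congrFun hβ0 i
      rw [hxB, hBapply]
      simp [hall]
    have hsurj : LinearMap.range (((1 : H →L[ℂ] H) - B w : H →L[ℂ] H) : H →ₗ[ℂ] H) = ⊤ := by
      rw [LinearMap.range_eq_top]
      intro u
      set β : Fin n → ℂ := (1 - M w)⁻¹.mulVec (fun i => α i u) with hβdef
      have hsolve : (1 - M w).mulVec β = fun i => α i u := by
        rw [hβdef, Matrix.mulVec_mulVec, Matrix.mul_nonsing_inv _ hdet, Matrix.one_mulVec]
      set x : H := u + ∑ i, β i • g w (y i) with hx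
      have hαx : ∀ j, α j x = β j := by
        intro j
        have h6 : β j - ((M w).mulVec β) j = α j u := by
          have := congrFun hsolve j
          rw [Matrix.sub_mulVec, Matrix.one_mulVec] at this
          exact this
        rw [hx, map_add, hcoef w β j]
        linear_combination -h6
      refine ⟨x, ?_⟩
      have hBx : B w x = x - u := by
        rw [hBapply w x]
        have h7 : ∀ i : Fin n, α i x • g w (y i) = β i • g w (y i) := fun i => by rw [hαx i]
        rw [Finset.sum_congr rfl fun i _ => h7 i, hx]
        abel
      simp [ContinuousLinearMap.sub_apply, hBx]
    set e := ContinuousLinearEquiv.ofBijective ((1 : H →L[ℂ] H) - B w) hinj hsurj with he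
    have hecoe : ∀ v : H, e v = ((1 : H →L[ℂ] H) - B w) v := fun v => by
      rw [he]; simp
    refine ⟨⟨(1 : H →L[ℂ] H) - B w, (e.symm : H →L[ℂ] H), ?_, ?_⟩, rfl⟩
    · ext v
      show ((1 : H →L[ℂ] H) - B w) (e.symm v) = v
      rw [← hecoe]
      exact e.apply_symm_apply v
    · ext v
      show e.symm (((1 : H →L[ℂ] H) - B w) v) = v
      rw [← hecoe]
      exact e.symm_apply_apply v
  -- d w ≠ 0 → IsUnit (1 - Amap w)
  have claim_a : ∀ w ∈ ball z₁ r, d w ≠ 0 → IsUnit ((1 : H →L[ℂ] H) - Amap w) := by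
    intro w hw hdw
    rw [← hfactor w hw]
    exact (hEunit w hw).mul (hunitB w hw hdw)
  -- IsUnit (1 - Amap w) → d w ≠ 0
  have claim_b : ∀ w ∈ ball z₁ r, IsUnit ((1 : H →L[ℂ] H) - Amap w) → d w ≠ 0 := by
    intro w hw hu hdw
    obtain ⟨x, hx0, hBx⟩ := hker w hdw
    have h8 : ((1 : H →L[ℂ] H) - Amap w) x = 0 := by
      rw [← hfactor w hw, ContinuousLinearMap.mul_apply, hBx, map_zero]
    exact hx0 (hunit_inj _ hu (by simpa using h8))
  -- differentiability of d on the ball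
  have hgdiff : ∀ w ∈ ball z₁ r, DifferentiableAt ℂ g w := by
    intro w hw
    exact DifferentiableAt.inverse
      ((differentiableAt_const _).sub ((hdiff w (hball hw).2).sub (differentiableAt_const _)))
      (hEunit w hw)
  have hddiff : DifferentiableOn ℂ d (ball z₁ r) := by
    intro w hw
    refine DifferentiableAt.differentiableWithinAt ?_
    have hentry : ∀ i j : Fin n, DifferentiableAt ℂ (fun w => M w i j) w := by
      intro i j
      exact (differentiableAt_const (α i)).clm_apply
        ((hgdiff w hw).clm_apply (differentiableAt_const (y j)))
    have hform : d = fun w => ∑ σ : Equiv.Perm (Fin n),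
        (Equiv.Perm.sign σ : ℂ) * ∏ i, (1 - M w) (σ i) i := by
      funext w; rw [hd]; exact Matrix.det_apply' _
    rw [hform]
    refine DifferentiableAt.fun_sum fun σ _ => DifferentiableAt.const_mul ?_ _
    refine DifferentiableAt.fun_finsetProd fun i _ => ?_
    simp only [Matrix.sub_apply]
    exact (differentiableAt_const _).sub (hentry (σ i) i)
  have hdan : AnalyticAt ℂ d z₁ := hddiff.analyticAt (isOpen_ball.mem_nhds (mem_ball_self hr))
  constructor
  · rcases hdan.eventually_eq_zero_or_eventually_ne_zero with h0 | h1
    · refine Or.inl ?_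
      filter_upwards [h0, isOpen_ball.mem_nhds (mem_ball_self hr)] with w hdw hwball hu
      exact claim_b w hwball hu hdw
    · refine Or.inr ?_
      filter_upwards [h1,
        mem_nhdsWithin_of_mem_nhds (isOpen_ball.mem_nhds (mem_ball_self hr))] with w hdw hwball
      exact claim_a w hwball hdw
  · intro hnu
    have hdz : d z₁ = 0 := by
      by_contra hdz
      exact hnu (claim_a z₁ (mem_ball_self hr) hdz)
    obtain ⟨x, hx0, hBx⟩ := hker z₁ hdz
    rw [Submodule.ne_bot_iff]
    refine ⟨x, ?_, hx0⟩
    rw [LinearMap.mem_ker]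
    show ((1 : H →L[ℂ] H) - Amap z₁) x = 0
    rw [← hfactor z₁ (mem_ball_self hr), ContinuousLinearMap.mul_apply, hBx, map_zero]

/-- Theorem D.1 of the paper, analytic Fredholm theory: if `T − S` is
compact and `C` is a connected component of `ℂ \ σ(T)`, then either `C` meets the
resolvent set of `S`, in which case `σ(S) ∩ C` has no accumulation point in `C`, or every
point of `C` is an eigenvalue of `S`. -/
theorem analytic_fredholm_dichotomy
    {K : Type*} [NormedAddCommGroup K] [InnerProductSpace ℂ K] [CompleteSpace K]
    [TopologicalSpace.SeparableSpace K]
    (T S : K →L[ℂ] K) (hcpt : IsCompactOperator (⇑(T - S)))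
    (C : Set ℂ) (z₀ : ℂ) (hz₀ : z₀ ∈ (spectrum ℂ T)ᶜ)
    (hC : C = connectedComponentIn (spectrum ℂ T)ᶜ z₀) :
    ((∃ z ∈ C, z ∉ spectrum ℂ S) ∧
      ∀ z ∈ C, ¬ AccPt z (Filter.principal (spectrum ℂ S ∩ C))) ∨
    (∀ z ∈ C, LinearMap.ker ((S - z • (1 : K →L[ℂ] K) : K →L[ℂ] K) : K →ₗ[ℂ] K) ≠ ⊥) := by
  subst hC
  set C := connectedComponentIn (spectrum ℂ T)ᶜ z₀ with hCdef
  have hρ_eq : (spectrum ℂ T)ᶜ = resolventSet ℂ T := by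
    rw [spectrum, compl_compl]
  have hρopen : IsOpen ((spectrum ℂ T)ᶜ) := by
    rw [hρ_eq]; exact spectrum.isOpen_resolventSet T
  have hCopen : IsOpen C := hρopen.connectedComponentIn
  have hCsub : C ⊆ (spectrum ℂ T)ᶜ := connectedComponentIn_subset _ _
  have hCpre : IsPreconnected C := isPreconnected_connectedComponentIn
  have hz₀C : z₀ ∈ C := mem_connectedComponentIn hz₀
  -- the analytic family of compact operators
  set Amap : ℂ → (K →L[ℂ] K) := fun z => resolvent T z * (S - T) with hAdef
  have hST : IsCompactOperator ⇑(S - T) := by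
    have h1 : ⇑(S - T) = -⇑(T - S) := by
      funext x; simp [ContinuousLinearMap.sub_apply, neg_sub]
    rw [h1]
    exact hcpt.neg
  have hcptA : ∀ z : ℂ, IsCompactOperator ⇑(Amap z) := fun z =>
    hST.clm_comp (resolvent T z)
  have hdiffA : ∀ z ∈ (spectrum ℂ T)ᶜ, DifferentiableAt ℂ Amap z := by
    intro z hz
    rw [hρ_eq] at hz
    exact ((spectrum.hasDerivAt_resolvent hz).differentiableAt).mul (differentiableAt_const _)
  -- key unit facts for w in the resolvent set of T
  have hTunit : ∀ w ∈ (spectrum ℂ T)ᶜ, IsUnit (algebraMap ℂ (K →L[ℂ] K) w - T) := by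
    intro w hw; rw [hρ_eq] at hw; exact hw
  have hfac : ∀ w ∈ (spectrum ℂ T)ᶜ,
      (algebraMap ℂ (K →L[ℂ] K) w - T) * (1 - Amap w) = algebraMap ℂ (K →L[ℂ] K) w - S := by
    intro w hw
    have h1 : (algebraMap ℂ (K →L[ℂ] K) w - T) * resolvent T w = 1 :=
      Ring.mul_inverse_cancel _ (hTunit w hw)
    have h2 : (algebraMap ℂ (K →L[ℂ] K) w - T) * (1 - Amap w)
        = (algebraMap ℂ (K →L[ℂ] K) w - T)
          - ((algebraMap ℂ (K →L[ℂ] K) w - T) * resolvent T w) * (S - T) := by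
      rw [hAdef]; noncomm_ring
    rw [h2, h1, one_mul]
    abel
  have hunit_iff : ∀ w ∈ (spectrum ℂ T)ᶜ,
      (IsUnit (1 - Amap w) ↔ w ∉ spectrum ℂ S) := by
    intro w hw
    rw [spectrum.notMem_iff]
    constructor
    · intro h
      rw [← hfac w hw]
      exact (hTunit w hw).mul h
    · intro h
      have h3 : (1 : K →L[ℂ] K) - Amap w = resolvent T w * (algebraMap ℂ (K →L[ℂ] K) w - S) := by
        have h4 := congrArg (fun x => resolvent T w * x) (hfac w hw)
        change resolvent T w * ((algebraMap ℂ (K →L[ℂ] K) w - T) * (1 - Amap w)) = resolvent T w * (algebraMap ℂ (K →L[ℂ] K) w - S) at h4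
        rw [← mul_assoc] at h4
        have h5 : resolvent T w * (algebraMap ℂ (K →L[ℂ] K) w - T) = 1 :=
          Ring.inverse_mul_cancel _ (hTunit w hw)
        rwa [h5, one_mul] at h4
      rw [h3]
      exact (isUnit_ringInverse.mpr (hTunit w hw)).mul h
  have hker_transfer : ∀ w ∈ (spectrum ℂ T)ᶜ,
      LinearMap.ker ((1 - Amap w : K →L[ℂ] K) : K →ₗ[ℂ] K) ≠ ⊥ → LinearMap.ker ((S - w • (1 : K →L[ℂ] K) : K →L[ℂ] K) : K →ₗ[ℂ] K) ≠ ⊥ := by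
    intro w hw h
    obtain ⟨x, hxmem, hx0⟩ := Submodule.exists_mem_ne_zero_of_ne_bot h
    rw [Submodule.ne_bot_iff]
    refine ⟨x, ?_, hx0⟩
    rw [LinearMap.mem_ker] at hxmem ⊢
    have h6 : (algebraMap ℂ (K →L[ℂ] K) w - S) x = 0 := by
      rw [← hfac w hw, ContinuousLinearMap.mul_apply]
      have h7 : ((1 : K →L[ℂ] K) - Amap w) x = 0 := hxmem
      rw [h7, map_zero]
    have h8 : (S - w • (1 : K →L[ℂ] K)) x = -((algebraMap ℂ (K →L[ℂ] K) w - S) x) := by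
      simp [ContinuousLinearMap.sub_apply, Algebra.algebraMap_eq_smul_one]
    rw [ContinuousLinearMap.coe_coe, h8, h6, neg_zero]
  -- localized dichotomy in terms of the spectrum of S
  have hloc : ∀ z ∈ C,
      ((∀ᶠ w in 𝓝 z, w ∈ spectrum ℂ S) ∨ (∀ᶠ w in 𝓝[≠] z, w ∉ spectrum ℂ S)) ∧
        (z ∈ spectrum ℂ S → LinearMap.ker ((S - z • (1 : K →L[ℂ] K) : K →L[ℂ] K) : K →ₗ[ℂ] K) ≠ ⊥) := by
    intro z hz
    obtain ⟨hdich, hkerl⟩ := local_dichotomy Amap hρopen hdiffA (hCsub hz) (hcptA z)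
    constructor
    · rcases hdich with h | h
      · left
        filter_upwards [h, hρopen.mem_nhds (hCsub hz)] with w hw hwρ
        by_contra hns
        exact hw ((hunit_iff w hwρ).mpr hns)
      · right
        filter_upwards [h, mem_nhdsWithin_of_mem_nhds (hρopen.mem_nhds (hCsub hz))] with w hw hwρ
        exact (hunit_iff w hwρ).mp hw
    · intro hzs
      have h9 : ¬ IsUnit (1 - Amap z) := fun hu => ((hunit_iff z (hCsub hz)).mp hu) hzs
      exact hker_transfer z (hCsub hz) (hkerl h9)
  -- the clopen argument
  set Uset : Set ℂ := {z : ℂ | ∀ᶠ w in 𝓝 z, w ∈ spectrum ℂ S} with hUdef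
  set Vset : Set ℂ := {z : ℂ | ∀ᶠ w in 𝓝[≠] z, w ∉ spectrum ℂ S} with hVdef
  have hUopen : IsOpen Uset := isOpen_setOf_eventually_nhds
  have hVopen : IsOpen Vset := isOpen_setOf_eventually_nhdsWithin
  have hdisj : Disjoint Uset Vset := by
    rw [Set.disjoint_left]
    intro z hzU hzV
    have h1 : ∀ᶠ w in 𝓝[≠] z, w ∈ spectrum ℂ S :=
      Filter.Eventually.filter_mono nhdsWithin_le_nhds hzU
    obtain ⟨w, hw1, hw2⟩ := (h1.and hzV).exists
    exact hw2 hw1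
  have hsub : C ⊆ Uset ∪ Vset := by
    intro z hz
    rcases (hloc z hz).1 with h | h
    · exact Or.inl h
    · exact Or.inr h
  rcases hCpre.subset_or_subset hUopen hVopen hdisj hsub with hCU | hCV
  · right
    intro z hz
    exact (hloc z hz).2 ((hCU hz).self_of_nhds)
  · left
    constructor
    · have h : ∀ᶠ w in 𝓝[≠] z₀, w ∉ spectrum ℂ S := hCV hz₀C
      have h2 : ∀ᶠ w in 𝓝[≠] z₀, w ∈ C :=
        mem_nhdsWithin_of_mem_nhds (hCopen.mem_nhds hz₀C)
      obtain ⟨w, hw1, hw2⟩ := (h.and h2).exists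
      exact ⟨w, hw2, hw1⟩
    · intro z hz hacc
      rw [accPt_iff_frequently] at hacc
      have h : ∀ᶠ w in 𝓝[≠] z, w ∉ spectrum ℂ S := hCV hz
      rw [eventually_nhdsWithin_iff] at h
      obtain ⟨w, ⟨hwne, hws, _⟩, himp⟩ := (hacc.and_eventually h).exists
      exact himp (by simpa using hwne) hws
end
end
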